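/- Let λ be a positive root and s ∈ B. If ρ(s) λ is a positive root that dominates α_s, then δ(λ) < δ(ρ(s) λ). -/

import Mathlib

open Real

variable {B : Type*}

/-- The pairing constant `⟨α_s, α_t⟩` of the standard bilinear form:
`-cos (π / M s t)` if `M s t ≠ 0`, and `-1` if `M s t = 0` (i.e. `m_{s,t} = ∞`). -/
noncomputable def pairing (M : CoxeterMatrix B) (s t : B) : ℝ :=
  if M s t = 0 then -1 else -Real.cos (Real.pi / (M s t : ℝ))

/-- The standard symmetric bilinear form on `V = B → ℝ`. -/
noncomputable def form [Fintype B] (M : CoxeterMatrix B) (v w : B → ℝ) : ℝ :=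
  ∑ s, ∑ t, v s * w t * pairing M s t

/-- The simple root `α_s`, i.e. the standard basis vector at `s`. -/
noncomputable def sroot [DecidableEq B] (s : B) : B → ℝ := Pi.single s 1

/-- `λ` is a root: `λ = ρ(w) α_s` for some `w ∈ W`, `s ∈ B`. -/
def IsRoot [DecidableEq B] (M : CoxeterMatrix B)
    (ρ : M.Group →* Module.End ℝ (B → ℝ)) (lam : B → ℝ) : Prop :=
  ∃ (w : M.Group) (s : B), ρ w (sroot s) = lam

/-- `λ` is positive: all coordinates are nonnegative. -/
def IsPos (lam : B → ℝ) : Prop := ∀ s, 0 ≤ lam s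

/-- `λ` is negative: all coordinates are nonpositive. -/
def IsNeg (lam : B → ℝ) : Prop := ∀ s, lam s ≤ 0

/-- `λ` is a positive root. -/
def IsPosRoot [DecidableEq B] (M : CoxeterMatrix B)
    (ρ : M.Group →* Module.End ℝ (B → ℝ)) (lam : B → ℝ) : Prop :=
  IsRoot M ρ lam ∧ IsPos lam

/-- `λ` dominates `μ`: for every `w ∈ W`, if `ρ(w) μ` is positive then so is `ρ(w) λ`. -/
def Dominates (M : CoxeterMatrix B)
    (ρ : M.Group →* Module.End ℝ (B → ℝ)) (lam mu : B → ℝ) : Prop :=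
  ∀ w : M.Group, IsPos (ρ w mu) → IsPos (ρ w lam)

/-- `λ` is a minimal root: a positive root dominating no positive root other than itself. -/
def IsMinimal [DecidableEq B] (M : CoxeterMatrix B)
    (ρ : M.Group →* Module.End ℝ (B → ℝ)) (lam : B → ℝ) : Prop :=
  IsPosRoot M ρ lam ∧
    ∀ mu, IsPosRoot M ρ mu → Dominates M ρ lam mu → mu = lam

/-- The depth `δ(λ)` of a positive root:
the least Coxeter length of a `w ∈ W` with `ρ(w⁻¹) λ` negative. -/
noncomputable def depth (M : CoxeterMatrix B)
    (ρ : M.Group →* Module.End ℝ (B → ℝ)) (lam : B → ℝ) : ℕ :=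
  sInf {n | ∃ w : M.Group, IsNeg (ρ w⁻¹ lam) ∧ M.toCoxeterSystem.length w = n}

/-- The partial order `λ ⪯ μ` on positive roots:
`μ = ρ(w) λ` for some `w` with `δ(μ) = ℓ(w) + δ(λ)`. -/
def PLE (M : CoxeterMatrix B)
    (ρ : M.Group →* Module.End ℝ (B → ℝ)) (lam mu : B → ℝ) : Prop :=
  ∃ w : M.Group, mu = ρ w lam ∧
    depth M ρ mu = M.toCoxeterSystem.length w + depth M ρ lam

/-- The Coxeter graph of `M`: distinct `s`, `t` are adjacent iff `M s t ≥ 3` or `M s t = 0`. -/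
def coxGraph (M : CoxeterMatrix B) : SimpleGraph B where
  Adj s t := s ≠ t ∧ (M s t = 0 ∨ 3 ≤ M s t)
  symm := by
    constructor
    intro s t h
    exact ⟨h.1.symm, by rw [M.symmetric t s]; exact h.2⟩
  loopless := by constructor; intro s h; exact h.1 rfl

/-- The support of a vector `λ ∈ V`. -/
def supp (lam : B → ℝ) : Set B := {s | lam s ≠ 0}


set_option linter.unusedSectionVars false
set_option maxHeartbeats 1000000
section aux
open CoxeterSystem
variable [DecidableEq B] [Fintype B] (M : CoxeterMatrix B)
  (ρ : M.Group →* Module.End ℝ (B → ℝ))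
  (hρ : ∀ (s : B) (v : B → ℝ),
      ρ (M.simple s) v = v - (2 * form M v (sroot s)) • sroot s)

lemma pairing_self (s : B) : pairing M s s = 1 := by
  simp [pairing, M.diagonal s]

lemma pairing_comm (s t : B) : pairing M s t = pairing M t s := by
  unfold pairing; rw [M.symmetric s t]

lemma form_sroot_right (v : B → ℝ) (s : B) :
    form M v (sroot s) = ∑ x, v x * pairing M x s := by
  unfold form sroot
  refine Finset.sum_congr rfl fun x _ => ?_
  rw [Fintype.sum_eq_single s (fun t ht => by simp [Pi.single_apply, ht])]
  simp

lemma form_sroot_sroot (x s : B) : form M (sroot x) (sroot s) = pairing M x s := by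
  rw [form_sroot_right]
  rw [Fintype.sum_eq_single x (fun t ht => by simp [sroot, Pi.single_apply, ht])]
  simp [sroot]

include hρ in
lemma rho_simple_sroot (t x : B) :
    ρ (M.simple t) (sroot x) = sroot x - (2 * pairing M x t) • sroot t := by
  rw [hρ, form_sroot_sroot]

include hρ in
lemma rho_simple_sroot_self (s : B) : ρ (M.simple s) (sroot s) = -sroot s := by
  rw [rho_simple_sroot M ρ hρ, pairing_self]
  module

lemma rho_mul_apply (g h : M.Group) (v : B → ℝ) : ρ (g * h) v = ρ g (ρ h v) := by
  rw [map_mul]; rfl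

lemma rho_inv_cancel (g : M.Group) (v : B → ℝ) : ρ g⁻¹ (ρ g v) = v := by
  rw [← rho_mul_apply, inv_mul_cancel, map_one]; rfl

lemma sroot_ne_zero (s : B) : sroot (B := B) s ≠ 0 := by
  intro h
  have := congrFun h s
  simp [sroot] at this

include hρ in
lemma sigma_combo_t (s t : B) (a b : ℝ) :
    ρ (M.simple t) (a • sroot s + b • sroot t)
      = a • sroot s + (-(2 * pairing M s t) * a - b) • sroot t := by
  rw [map_add, map_smul, map_smul, rho_simple_sroot M ρ hρ t s,
    rho_simple_sroot_self M ρ hρ t]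
  module

include hρ in
lemma sigma_combo_s (s t : B) (a b : ℝ) :
    ρ (M.simple s) (a • sroot s + b • sroot t)
      = (-(2 * pairing M s t) * b - a) • sroot s + b • sroot t := by
  rw [map_add, map_smul, map_smul, rho_simple_sroot M ρ hρ s t,
    rho_simple_sroot_self M ρ hρ s, pairing_comm M t s]
  module

include hρ in
lemma dihedral_formula_inf (s t : B) (hst : s ≠ t) (h0 : M s t = 0) (k : ℕ) :
    ∃ a b : ℝ, 0 ≤ a ∧ 0 ≤ b ∧ (if Even k then b ≤ a else a ≤ b) ∧
      ρ (M.toCoxeterSystem.wordProd (CoxeterSystem.alternatingWord s t k)) (sroot s)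
        = a • sroot s + b • sroot t := by
  have hc : pairing M s t = -1 := by simp [pairing, h0]
  induction k with
  | zero =>
      refine ⟨1, 0, by norm_num, le_refl 0, by norm_num, ?_⟩
      simp only [CoxeterSystem.alternatingWord, CoxeterSystem.wordProd_nil, map_one,
        Module.End.one_apply]
      module
  | succ k ih =>
      obtain ⟨a, b, ha, hb, hab, heq⟩ := ih
      rw [CoxeterSystem.alternatingWord_succ', CoxeterSystem.wordProd_cons,
        M.toCoxeterSystem_simple, rho_mul_apply]
      rcases Nat.even_or_odd k with hk | hk
      · rw [if_pos hk] at hab ⊢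
        refine ⟨a, 2 * a - b, ha, by linarith, ?_, ?_⟩
        · rw [if_neg (by simp [Nat.even_add_one, hk])]
          linarith
        · rw [heq, sigma_combo_t M ρ hρ s t a b, hc]
          norm_num
      · rw [if_neg (Nat.not_even_iff_odd.2 hk)] at hab ⊢
        refine ⟨2 * b - a, b, by linarith, hb, ?_, ?_⟩
        · rw [if_pos (by simpa [Nat.even_add_one] using hk)]
          linarith
        · rw [heq, sigma_combo_s M ρ hρ s t a b, hc]
          norm_num


include hρ in
lemma dihedral_formula_fin (s t : B) (hst : s ≠ t) (h0 : M s t ≠ 0) (k : ℕ) :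
    ρ (M.toCoxeterSystem.wordProd (alternatingWord s t k)) (sroot s)
      = (Real.sin ((if Even k then (k : ℝ) + 1 else (k : ℝ)) * (Real.pi / (M s t : ℝ)))
          / Real.sin (Real.pi / (M s t : ℝ))) • sroot s
      + (Real.sin ((if Even k then (k : ℝ) else (k : ℝ) + 1) * (Real.pi / (M s t : ℝ)))
          / Real.sin (Real.pi / (M s t : ℝ))) • sroot t := by
  set θ := Real.pi / (M s t : ℝ) with hθdef
  have hm2 : 2 ≤ M s t := by
    rcases Nat.lt_or_ge (M s t) 2 with h | h
    · interval_cases h' : M s t <;> simp_all [M.off_diagonal s t hst]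
    · exact h
  have hmr : (2:ℝ) ≤ (M s t : ℝ) := by exact_mod_cast hm2
  have hθpos : 0 < θ := by positivity
  have hθlt : θ < Real.pi := by
    rw [hθdef, div_lt_iff₀ (by linarith)]
    nlinarith [Real.pi_pos]
  have hsinpos : 0 < Real.sin θ := Real.sin_pos_of_pos_of_lt_pi hθpos hθlt
  have hsinne : Real.sin θ ≠ 0 := ne_of_gt hsinpos
  have hc : pairing M s t = -Real.cos θ := by simp [pairing, h0, hθdef]
  have key : ∀ x : ℝ, Real.sin (x + θ) = 2 * Real.cos θ * Real.sin x - Real.sin (x - θ) := by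
    intro x; rw [Real.sin_add, Real.sin_sub]; ring
  induction k with
  | zero =>
      simp only [alternatingWord, wordProd_nil, map_one, Module.End.one_apply]
      norm_num [div_self hsinne]
  | succ k ih =>
      have key2 : Real.sin (((k:ℝ)+2)*θ)
          = 2*Real.cos θ*Real.sin (((k:ℝ)+1)*θ) - Real.sin ((k:ℝ)*θ) := by
        have h := key (((k:ℝ)+1)*θ)
        rw [show ((k:ℝ)+1)*θ + θ = ((k:ℝ)+2)*θ by ring,
          show ((k:ℝ)+1)*θ - θ = (k:ℝ)*θ by ring] at h
        exact h
      rw [alternatingWord_succ', wordProd_cons, M.toCoxeterSystem_simple, rho_mul_apply M ρ, ih]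
      rcases Nat.even_or_odd k with hk | hk
      · have hk1 : ¬ Even (k+1) := by simp [Nat.even_add_one, hk]
        simp only [if_pos hk, if_neg hk1]
        rw [sigma_combo_t M ρ hρ, hc]
        push_cast
        have e2 : -(2 * -Real.cos θ) * (Real.sin (((k:ℝ)+1)*θ)/Real.sin θ)
            - Real.sin ((k:ℝ)*θ)/Real.sin θ = Real.sin (((k:ℝ)+1+1)*θ)/Real.sin θ := by
          rw [show ((k:ℝ)+1+1) = ((k:ℝ)+2) by ring, key2]; ring
        rw [e2]
      · have hk0 : ¬ Even k := Nat.not_even_iff_odd.2 hk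
        have hk1 : Even (k+1) := by simpa [Nat.even_add_one] using hk
        simp only [if_neg hk0, if_pos hk1]
        rw [sigma_combo_s M ρ hρ, hc]
        push_cast
        have e2 : -(2 * -Real.cos θ) * (Real.sin (((k:ℝ)+1)*θ)/Real.sin θ)
            - Real.sin ((k:ℝ)*θ)/Real.sin θ = Real.sin (((k:ℝ)+1+1)*θ)/Real.sin θ := by
          rw [show ((k:ℝ)+1+1) = ((k:ℝ)+2) by ring, key2]; ring
        rw [e2]

lemma two_letter_alternating (s t : B) :
    ∀ ω : List B, (∀ x ∈ ω, x = s ∨ x = t) → M.toCoxeterSystem.IsReduced ω →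
      ω = alternatingWord s t ω.length ∨ ω = alternatingWord t s ω.length := by
  set cs := M.toCoxeterSystem
  intro ω
  induction ω with
  | nil => intro _ _; left; rfl
  | cons x rest ih =>
      intro hl hred
      match rest, ih with
      | [], _ =>
          rcases hl x (by simp) with rfl | rfl
          · right; rfl
          · left; rfl
      | y :: rest', ih =>
          have hxy : x ≠ y := by
            rintro rfl
            have h1 : cs.wordProd (x :: x :: rest') = cs.wordProd rest' := by
              rw [wordProd_cons, wordProd_cons, cs.simple_mul_simple_cancel_left]
            have h2 := cs.length_wordProd_le rest'
            have h3 : cs.length (cs.wordProd (x :: x :: rest')) = rest'.length + 2 := hred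
            rw [h1] at h3
            omega
          have hred' : cs.IsReduced (y :: rest') := by
            have := CoxeterSystem.IsReduced.drop (cs := cs) (ω := x :: y :: rest') hred 1
            simpa using this
          have hl' : ∀ z ∈ y :: rest', z = s ∨ z = t := fun z hz => hl z (by simp [hz])
          rcases ih hl' hred' with h | h
          · -- y :: rest' = alternatingWord s t (n+1), head = if Even n then t else s
            left
            have hlen : (y :: rest').length = rest'.length + 1 := rfl
            rw [hlen] at h
            have hcopy := h
            rw [alternatingWord_succ'] at h
            have hy : y = (if Even rest'.length then t else s) := (List.cons.injEq _ _ _ _).mp h |>.1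
            have hrest : rest' = alternatingWord s t rest'.length :=
              (List.cons.injEq _ _ _ _).mp h |>.2
            show x :: y :: rest' = alternatingWord s t (rest'.length + 2)
            rw [alternatingWord_succ' s t (rest'.length + 1)]
            have hx : x = (if Even (rest'.length + 1) then t else s) := by
              rcases Nat.even_or_odd rest'.length with he | he
              · rw [if_pos he] at hy
                rw [if_neg (by simp [Nat.even_add_one, he])]
                rcases hl x (by simp) with rfl | rfl
                · rfl
                · exact (hxy hy.symm).elim
              · rw [if_neg (Nat.not_even_iff_odd.2 he)] at hy
                rw [if_pos (by simpa [Nat.even_add_one] using he)]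
                rcases hl x (by simp) with rfl | rfl
                · exact (hxy hy.symm).elim
                · rfl
            rw [← hx, ← hcopy]
          · right
            have hlen : (y :: rest').length = rest'.length + 1 := rfl
            rw [hlen] at h
            have hcopy := h
            rw [alternatingWord_succ'] at h
            have hy : y = (if Even rest'.length then s else t) := (List.cons.injEq _ _ _ _).mp h |>.1
            have hrest : rest' = alternatingWord t s rest'.length :=
              (List.cons.injEq _ _ _ _).mp h |>.2
            show x :: y :: rest' = alternatingWord t s (rest'.length + 2)
            rw [alternatingWord_succ' t s (rest'.length + 1)]
            have hx : x = (if Even (rest'.length + 1) then s else t) := by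
              rcases Nat.even_or_odd rest'.length with he | he
              · rw [if_pos he] at hy
                rw [if_neg (by simp [Nat.even_add_one, he])]
                rcases hl x (by simp) with rfl | rfl
                · exact (hxy hy.symm).elim
                · rfl
              · rw [if_neg (Nat.not_even_iff_odd.2 he)] at hy
                rw [if_pos (by simpa [Nat.even_add_one] using he)]
                rcases hl x (by simp) with rfl | rfl
                · rfl
                · exact (hxy hy.symm).elim
            rw [← hx, ← hcopy]

include hρ in
lemma dihedral_pos (s t : B) (hst : s ≠ t) (ω : List B)
    (hl : ∀ x ∈ ω, x = s ∨ x = t) (hred : M.toCoxeterSystem.IsReduced ω)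
    (hs : M.toCoxeterSystem.length (M.toCoxeterSystem.wordProd ω * M.simple s)
      = ω.length + 1) :
    ∃ a b : ℝ, 0 ≤ a ∧ 0 ≤ b ∧
      ρ (M.toCoxeterSystem.wordProd ω) (sroot s) = a • sroot s + b • sroot t := by
  set cs := M.toCoxeterSystem with hcs
  -- ω cannot equal a nonempty alternating word ending in s
  have hconcat : ∀ n : ℕ, cs.wordProd ω ≠ cs.wordProd (alternatingWord t s (n + 1)) ∨
      ω.length ≠ n + 1 := by
    intro n
    by_contra hcon
    push_neg at hcon
    obtain ⟨h1, h2⟩ := hcon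
    have : cs.wordProd ω * M.simple s = cs.wordProd (alternatingWord s t n) := by
      rw [h1, alternatingWord_succ, wordProd_concat, ← M.toCoxeterSystem_simple,
        cs.simple_mul_simple_cancel_right]
    rw [this] at hs
    have := cs.length_wordProd_le (alternatingWord s t n)
    rw [length_alternatingWord] at this
    omega
  rcases two_letter_alternating M s t ω hl hred with h | h
  · -- ω = alternatingWord s t k
    by_cases h0 : M s t = 0
    · obtain ⟨a, b, ha, hb, _, heq⟩ := dihedral_formula_inf M ρ hρ s t hst h0 ω.length
      exact ⟨a, b, ha, hb, by rw [h]; exact heq⟩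
    · -- k < M s t
      have hk1 : ω.length ≤ M s t := by
        by_contra hgt
        exact cs.not_isReduced_alternatingWord s t h0 (by omega) (h ▸ hred)
      have hk2 : ω.length ≠ M s t := by
        rintro hkm
        have hm2 : 2 ≤ M s t := by
          have := M.off_diagonal s t hst
          omega
        obtain ⟨n, hn⟩ : ∃ n, M s t = n + 1 := ⟨M s t - 1, by omega⟩
        rcases hconcat n with hne | hne
        · apply hne
          rw [h, hkm, hn]
          have := cs.wordProd_braidWord_eq s t
          unfold CoxeterSystem.braidWord at this
          rw [M.symmetric t s] at this
          rw [← hn, this, hn]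
        · exact hne (by omega)
      have hklt : ω.length < M s t := lt_of_le_of_ne hk1 hk2
      have heq := dihedral_formula_fin M ρ hρ s t hst h0 ω.length
      set θ := Real.pi / (M s t : ℝ) with hθdef
      have hmpos : (0:ℝ) < (M s t : ℝ) := by
        have : 0 < M s t := Nat.pos_of_ne_zero h0
        exact_mod_cast this
      have hθpos : 0 < θ := by positivity
      have hsinpos : 0 < Real.sin θ := by
        apply Real.sin_pos_of_pos_of_lt_pi hθpos
        rw [hθdef]
        rw [div_lt_iff₀ hmpos]
        have hm2 : 2 ≤ M s t := by
          have := M.off_diagonal s t hst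
          omega
        have : (2:ℝ) ≤ (M s t : ℝ) := by exact_mod_cast hm2
        nlinarith [Real.pi_pos]
      have hsin_nonneg : ∀ j : ℝ, 0 ≤ j → j ≤ (M s t : ℝ) → 0 ≤ Real.sin (j * θ) := by
        intro j hj0 hjm
        apply Real.sin_nonneg_of_nonneg_of_le_pi (by positivity)
        rw [hθdef]
        rw [div_eq_mul_inv, ← mul_assoc]
        calc j * Real.pi * (M s t : ℝ)⁻¹ ≤ (M s t : ℝ) * Real.pi * (M s t : ℝ)⁻¹ := by
              apply mul_le_mul_of_nonneg_right _ (by positivity)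
              exact mul_le_mul_of_nonneg_right hjm Real.pi_pos.le
          _ = Real.pi := by field_simp
      have hb1 : ((ω.length : ℝ)) ≤ (M s t : ℝ) := by exact_mod_cast hk1
      have hb2 : ((ω.length : ℝ) + 1) ≤ (M s t : ℝ) := by
        have : ω.length + 1 ≤ M s t := hklt
        exact_mod_cast this
      refine ⟨_, _, ?_, ?_, by rw [h]; exact heq⟩
      · apply div_nonneg _ hsinpos.le
        apply hsin_nonneg
        · split <;> positivity
        · split <;> [exact hb2; exact hb1]
      · apply div_nonneg _ hsinpos.le
        apply hsin_nonneg
        · split <;> positivity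
        · split <;> [exact hb1; exact hb2]
  · -- ω = alternatingWord t s k; must be empty
    match hω : ω, h with
    | [], _ =>
        refine ⟨1, 0, by norm_num, le_refl 0, ?_⟩
        simp only [wordProd_nil, map_one, Module.End.one_apply]
        module
    | z :: rest, h =>
        exfalso
        have hlen : (z :: rest).length = rest.length + 1 := rfl
        rcases hconcat rest.length with hne | hne
        · exact hne (by rw [← hlen, ← h])
        · exact hne hlen

include hρ in
lemma lemmaA (n : ℕ) : ∀ (w : M.Group) (s : B), M.toCoxeterSystem.length w = n →
    M.toCoxeterSystem.length (w * M.simple s) = n + 1 →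
    ∀ x, 0 ≤ ρ w (sroot s) x := by
  set cs := M.toCoxeterSystem with hcs
  induction n using Nat.strong_induction_on with
  | _ n ihn =>
    intro w s hn hws
    by_cases hw1 : w = 1
    · subst hw1
      rw [map_one]
      intro x
      simp only [Module.End.one_apply, sroot, Pi.single_apply]
      split <;> norm_num
    · obtain ⟨t, ht⟩ := cs.exists_rightDescent_of_ne_one hw1
      have hsimp : cs.simple = M.simple := M.toCoxeterSystem_simple
      have hts : t ≠ s := by
        rintro rfl
        have := cs.isRightDescent_iff.mp ht
        rw [hsimp, hn] at this
        omega
      have hd : cs.length (w * M.simple t) + 1 = n := by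
        have := cs.isRightDescent_iff.mp ht
        rw [hsimp, hn] at this
        exact this
      -- the set of lengths of prefixes v with w = v * (word in s,t), lengths adding
      set N : Set ℕ := {j | ∃ (v : M.Group) (ω : List B), (∀ x ∈ ω, x = s ∨ x = t) ∧
        w = v * cs.wordProd ω ∧ cs.length v + ω.length = n ∧ cs.length v = j} with hNdef
      have hN0 : cs.length (w * M.simple t) ∈ N := by
        refine ⟨w * M.simple t, [t], by simp, ?_, ?_, rfl⟩
        · rw [wordProd_singleton, hsimp, mul_assoc]
          have := cs.simple_mul_simple_self t
          rw [hsimp] at this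
          rw [this, mul_one]
        · simpa using hd
      have hNne : N.Nonempty := ⟨_, hN0⟩
      set j := sInf N with hjdef
      obtain ⟨v, ω, hlet, hw, hlen, hjv⟩ := Nat.sInf_mem hNne
      have hjlt : j < n := by
        have := Nat.sInf_le hN0
        omega
      have nodesc : ∀ r : B, (r = s ∨ r = t) → ¬ cs.IsRightDescent v r := by
        rintro r hr hdesc
        have hd' : cs.length (v * cs.simple r) + 1 = cs.length v :=
          cs.isRightDescent_iff.mp hdesc
        have hmem : cs.length (v * cs.simple r) ∈ N := by
          refine ⟨v * cs.simple r, r :: ω, ?_, ?_, ?_, rfl⟩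
          · intro x hx
            rcases List.mem_cons.mp hx with rfl | hx
            · exact hr
            · exact hlet x hx
          · rw [wordProd_cons, ← mul_assoc, cs.simple_mul_simple_cancel_right]
            exact hw
          · simp only [List.length_cons]
            omega
        have := Nat.sInf_le hmem
        omega
      have hred : cs.IsReduced ω := by
        have h1 := cs.length_wordProd_le ω
        have h2 := cs.length_mul_le v (cs.wordProd ω)
        rw [← hw, hn] at h2
        unfold CoxeterSystem.IsReduced
        omega
      have hds' : cs.length (cs.wordProd ω * M.simple s) = ω.length + 1 := by
        have h1 := cs.length_mul_le (cs.wordProd ω) (M.simple s)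
        have h2 : cs.length (M.simple s) = 1 := by rw [← hsimp]; exact cs.length_simple s
        have h3 := cs.length_mul_le v (cs.wordProd ω * M.simple s)
        rw [← mul_assoc, ← hw, hws] at h3
        have h0 : cs.length (cs.wordProd ω) = ω.length := hred
        omega
      obtain ⟨a, b, ha, hb, heq⟩ := dihedral_pos M ρ hρ s t (Ne.symm hts) ω hlet hred hds'
      have hvs : cs.length (v * M.simple s) = cs.length v + 1 := by
        have := cs.not_isRightDescent_iff.mp (nodesc s (Or.inl rfl))
        rwa [hsimp] at this
      have hvt : cs.length (v * M.simple t) = cs.length v + 1 := by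
        have := cs.not_isRightDescent_iff.mp (nodesc t (Or.inr rfl))
        rwa [hsimp] at this
      have posS := ihn (cs.length v) (by omega) v s rfl (by rw [hvs])
      have posT := ihn (cs.length v) (by omega) v t rfl (by rw [hvt])
      intro x
      rw [hw, rho_mul_apply M ρ, heq, map_add, map_smul, map_smul]
      simp only [Pi.add_apply, Pi.smul_apply, smul_eq_mul]
      exact add_nonneg (mul_nonneg ha (posS x)) (mul_nonneg hb (posT x))

end aux

theorem statement4 [DecidableEq B] [Fintype B] (M : CoxeterMatrix B)
    (ρ : M.Group →* Module.End ℝ (B → ℝ))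
    (hρ : ∀ (s : B) (v : B → ℝ),
      ρ (M.simple s) v = v - (2 * form M v (sroot s)) • sroot s)
    (lam : B → ℝ) (hlam : IsPosRoot M ρ lam) (s : B)
    (hpos : IsPosRoot M ρ (ρ (M.simple s) lam))
    (hdom : Dominates M ρ (ρ (M.simple s) lam) (sroot s)) :
    depth M ρ lam < depth M ρ (ρ (M.simple s) lam) := by
  set cs := M.toCoxeterSystem with hcs
  have hsimp : cs.simple = M.simple := M.toCoxeterSystem_simple
  set slam := ρ (M.simple s) lam with hslam
  -- the depth-defining set of sλ is nonempty
  obtain ⟨u, t, hu⟩ := hpos.1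
  have hmem0 : cs.length (u * M.simple t) ∈
      {n | ∃ w : M.Group, IsNeg (ρ w⁻¹ slam) ∧ cs.length w = n} := by
    refine ⟨u * M.simple t, ?_, rfl⟩
    have h1 : ρ (u * M.simple t)⁻¹ slam = ρ (M.simple t) (sroot t) := by
      rw [← hu, ← rho_mul_apply M ρ, mul_inv_rev, mul_assoc, inv_mul_cancel, mul_one,
        ← hsimp, cs.inv_simple, hsimp]
    rw [h1, rho_simple_sroot_self M ρ hρ]
    intro x
    simp only [Pi.neg_apply, neg_nonpos, sroot, Pi.single_apply]
    split <;> norm_num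
  set S : Set ℕ := {n | ∃ w : M.Group, IsNeg (ρ w⁻¹ slam) ∧ cs.length w = n} with hS
  obtain ⟨w, hneg, hlw⟩ := Nat.sInf_mem (⟨_, hmem0⟩ : S.Nonempty)
  -- ρ w⁻¹ slam is nonzero
  obtain ⟨u', t', hu'⟩ := hlam.1
  have hnz : ρ w⁻¹ slam ≠ 0 := by
    intro h0
    apply sroot_ne_zero (B := B) t'
    have : ρ w⁻¹ slam = ρ (w⁻¹ * (M.simple s * u')) (sroot t') := by
      rw [rho_mul_apply M ρ, rho_mul_apply M ρ, hu', ← hslam]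
    rw [this] at h0
    have := congrArg (ρ (w⁻¹ * (M.simple s * u'))⁻¹) h0
    rwa [rho_inv_cancel M ρ, map_zero] at this
  have hnotpos : ¬ IsPos (ρ w⁻¹ slam) := by
    intro hp
    apply hnz
    funext x
    exact le_antisymm (hneg x) (hp x)
  have hnotpos_s : ¬ IsPos (ρ w⁻¹ (sroot s)) := fun hp => hnotpos (hdom w⁻¹ hp)
  -- by Lemma A, w⁻¹ * simple s is shorter than w⁻¹
  have hdesc : cs.length (w⁻¹ * M.simple s) + 1 = cs.length w⁻¹ := by
    rcases cs.length_mul_simple w⁻¹ s with h | h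
    · exfalso
      apply hnotpos_s
      rw [hsimp] at h
      exact lemmaA M ρ hρ (cs.length w⁻¹) w⁻¹ s rfl h
    · rwa [hsimp] at h
  rw [cs.length_inv, hlw] at hdesc
  -- witness for the depth of lam
  have hmemlam : cs.length (M.simple s * w) ∈
      {n | ∃ w' : M.Group, IsNeg (ρ w'⁻¹ lam) ∧ cs.length w' = n} := by
    refine ⟨M.simple s * w, ?_, rfl⟩
    have : (M.simple s * w)⁻¹ = w⁻¹ * M.simple s := by
      rw [mul_inv_rev, ← hsimp, cs.inv_simple]
    rw [this, rho_mul_apply M ρ, ← hslam]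
    exact hneg
  have hlen' : cs.length (M.simple s * w) + 1 = sInf S := by
    have : cs.length (M.simple s * w) = cs.length (w⁻¹ * M.simple s) := by
      rw [← cs.length_inv (M.simple s * w), mul_inv_rev, ← hsimp, cs.inv_simple]
    omega
  have hle := Nat.sInf_le hmemlam
  have : depth M ρ lam ≤ cs.length (M.simple s * w) := hle
  have hfin : depth M ρ slam = sInf S := rfl
  omega
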